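/- arXiv:1611.02867 — 3 statements merged into one kernel-verified Lean document; each statement's English description precedes it below -/
import Mathlib

section
/- Let A_0, ..., A_{n-1} be finite idempotent algebras of a common signature sharing a common Taylor term, and let α be a proper nonempty subset of {0,...,n-1} such that A_i has a cube term for every i ∈ α, and A_j has a sink s_j ∈ A_j for every j ∉ α. If R ≤_sd A_0 × ... × A_{n-1} is a subdirect product, then every tuple x with (x(i))_{i∈α} ∈ Proj_α R and x(j) = s_j for all j ∉ α belongs to R; i.e., the set X := Proj_α R × {(s_j)_{j∉α}} is a subuniverse of R. -/
/-- A (functional) signature: a type of operation symbols, each with an arity. -/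
structure Signature where
  ops : Type
  arity : ops → ℕ

/-- Terms of a signature in `n` variables. -/
inductive UTerm (σ : Signature) : ℕ → Type
  | var : ∀ {n}, Fin n → UTerm σ n
  | app : ∀ {n} (f : σ.ops), (Fin (σ.arity f) → UTerm σ n) → UTerm σ n

/-- An algebra of signature `σ` on carrier `A`. -/
structure UAlgebra (σ : Signature) (A : Type) where
  interp : ∀ f : σ.ops, (Fin (σ.arity f) → A) → A

namespace UAlgebra

variable {σ : Signature} {A : Type}

/-- The term operation induced by a term. -/
def eval (Alg : UAlgebra σ A) {n : ℕ} : UTerm σ n → (Fin n → A) → A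
  | .var i, env => env i
  | .app f ts, env => Alg.interp f fun j => Alg.eval (ts j) env

/-- An algebra is idempotent if every basic operation satisfies `f(a,…,a) = a`. -/
def Idempotent (Alg : UAlgebra σ A) : Prop :=
  ∀ (f : σ.ops) (a : A), Alg.interp f (fun _ => a) = a

/-- A congruence: an equivalence relation compatible with the basic operations. -/
def IsCong (Alg : UAlgebra σ A) (θ : A → A → Prop) : Prop :=
  (∀ a, θ a a) ∧ (∀ a b, θ a b → θ b a) ∧ (∀ a b c, θ a b → θ b c → θ a c) ∧
  ∀ (f : σ.ops) (x y : Fin (σ.arity f) → A),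
    (∀ j, θ (x j) (y j)) → θ (Alg.interp f x) (Alg.interp f y)

/-- A subuniverse: a subset closed under the basic operations. -/
def IsSubuniv (Alg : UAlgebra σ A) (B : Set A) : Prop :=
  ∀ (f : σ.ops) (x : Fin (σ.arity f) → A), (∀ j, x j ∈ B) → Alg.interp f x ∈ B

/-- A simple algebra: more than one element, and the only congruences are `0` and `1`. -/
def Simple (Alg : UAlgebra σ A) : Prop :=
  (∃ a b : A, a ≠ b) ∧
  ∀ θ : A → A → Prop, Alg.IsCong θ → (∀ a b, θ a b ↔ a = b) ∨ (∀ a b, θ a b)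

/-- An abelian algebra: for every `(ℓ+m)`-ary term operation `t` and tuples
`a b : Aᶩ`, `u v : Aᵐ`, `t(a,u) = t(a,v) ↔ t(b,u) = t(b,v)`. -/
def Abelian (Alg : UAlgebra σ A) : Prop :=
  ∀ (ℓ m : ℕ) (t : UTerm σ (ℓ + m)) (a b : Fin ℓ → A) (u v : Fin m → A),
    (Alg.eval t (Fin.append a u) = Alg.eval t (Fin.append a v) ↔
      Alg.eval t (Fin.append b u) = Alg.eval t (Fin.append b v))

/-- `B` is an absorbing subalgebra of `A` with respect to the `k`-ary term `t`:
`B` is a (nonempty) subuniverse, and applying `t` to arguments all of which lie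
in `B` except possibly one (arbitrary in `A`) lands in `B`. -/
def AbsorbingWith (Alg : UAlgebra σ A) (B : Set A) {k : ℕ} (t : UTerm σ k) : Prop :=
  B.Nonempty ∧ Alg.IsSubuniv B ∧
  ∀ (j : Fin k) (x : Fin k → A), (∀ i, i ≠ j → x i ∈ B) → Alg.eval t x ∈ B

/-- `B ◁ A` : `B` is absorbing with respect to some term. -/
def Absorbing (Alg : UAlgebra σ A) (B : Set A) : Prop :=
  ∃ (k : ℕ) (t : UTerm σ k), Alg.AbsorbingWith B t

/-- `B ◁◁ A` : `B` is minimal among absorbing subuniverses of `A`. -/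
def MinAbsorbing (Alg : UAlgebra σ A) (B : Set A) : Prop :=
  Alg.Absorbing B ∧ ∀ C : Set A, Alg.Absorbing C → C ⊆ B → C = B

/-- A congruence of the subalgebra with universe `R`. -/
def IsCongOn (Alg : UAlgebra σ A) (R : Set A) (θ : A → A → Prop) : Prop :=
  (∀ a ∈ R, θ a a) ∧ (∀ a b, θ a b → θ b a) ∧ (∀ a b c, θ a b → θ b c → θ a c) ∧
  (∀ a b, θ a b → a ∈ R ∧ b ∈ R) ∧
  ∀ (f : σ.ops) (x y : Fin (σ.arity f) → A),
    (∀ j, θ (x j) (y j)) → θ (Alg.interp f x) (Alg.interp f y)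

/-- The join of `θ₁` and `θ₂` in the congruence lattice of the subalgebra `R`
is the top congruence `1_R`. -/
def JoinIsTop (Alg : UAlgebra σ A) (R : Set A) (θ₁ θ₂ : A → A → Prop) : Prop :=
  ∀ θ : A → A → Prop, Alg.IsCongOn R θ →
    (∀ a b, θ₁ a b → θ a b) → (∀ a b, θ₂ a b → θ a b) →
    ∀ a ∈ R, ∀ b ∈ R, θ a b

end UAlgebra

/-- Interpreting a `Fin 2`-indexed choice of the variables `x`, `y`. -/
def pick {A : Type} (x y : A) : Fin 2 → A := fun b => if b = 0 then x else y

/-- `t` is a common Taylor term for the family `Alg`: it is idempotent in every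
algebra of the family, and for each coordinate `i` there is an identity
`t(u_0,…,u_{n-1}) ≈ t(v_0,…,v_{n-1})` (each `u_j, v_j ∈ {x,y}`, `u_i = x`,
`v_i = y`) holding in every algebra of the family. -/
def IsTaylorFamily {σ : Signature} {ι : Type} {A : ι → Type}
    (Alg : ∀ i, UAlgebra σ (A i)) {n : ℕ} (t : UTerm σ n) : Prop :=
  ∃ u v : Fin n → Fin n → Fin 2,
    (∀ i : Fin n, u i i = 0 ∧ v i i = 1) ∧
    ∀ k : ι,
      (∀ a : A k, (Alg k).eval t (fun _ => a) = a) ∧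
      ∀ (i : Fin n) (x y : A k),
        (Alg k).eval t (fun j => pick x y (u i j)) =
        (Alg k).eval t (fun j => pick x y (v i j))

/-- Taylor term of a single algebra. -/
def IsTaylorFor {σ : Signature} {A : Type} (Alg : UAlgebra σ A) {n : ℕ}
    (t : UTerm σ n) : Prop :=
  IsTaylorFamily (fun _ : PUnit => Alg) t

/-- The product algebra of a family of algebras of a common signature. -/
def prodAlgebra {σ : Signature} {ι : Type} {A : ι → Type}
    (Alg : ∀ i, UAlgebra σ (A i)) : UAlgebra σ (∀ i, A i) :=
  ⟨fun f x i => (Alg i).interp f (fun j => x j i)⟩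

/-- `R ≤_sd ∏ A_i` : `R` is a (nonempty) subuniverse of the product whose
coordinate projections are all surjective. -/
def IsSubdirect {σ : Signature} {ι : Type} {A : ι → Type}
    (Alg : ∀ i, UAlgebra σ (A i)) (R : Set (∀ i, A i)) : Prop :=
  R.Nonempty ∧ (prodAlgebra Alg).IsSubuniv R ∧
  ∀ (i : ι) (a : A i), ∃ r ∈ R, r i = a

/-- The kernel `η_s` of the projection of `R` onto the coordinates in `s`,
as a relation (congruence of the subalgebra `R`). -/
def projKer {ι : Type} {A : ι → Type} (R : Set (∀ i, A i)) (s : Set ι) :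
    (∀ i, A i) → (∀ i, A i) → Prop :=
  fun x y => x ∈ R ∧ y ∈ R ∧ ∀ i ∈ s, x i = y i

/-- The kernels of the `i`-th and `j`-th coordinate projections of `R` coincide. -/
def kerEq {ι : Type} {A : ι → Type} (R : Set (∀ i, A i)) (i j : ι) : Prop :=
  ∀ x ∈ R, ∀ y ∈ R, (x i = y i ↔ x j = y j)
/-- A cube term: a `k`-ary idempotent term such that for each coordinate `i`
there is an identity `t(x_1,…,x_k) ≈ y` with each `x_j ∈ {x,y}` and `x_i = x`. -/
def IsCubeTerm {σ : Signature} {A : Type} (Alg : UAlgebra σ A) {k : ℕ}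
    (t : UTerm σ k) : Prop :=
  (∀ a : A, Alg.eval t (fun _ => a) = a) ∧
  ∀ i : Fin k, ∃ u : Fin k → Fin 2, u i = 0 ∧
    ∀ x y : A, Alg.eval t (fun j => pick x y (u j)) = y

/-- A term operation depends on its `j`-th argument. -/
def UDependsOn {σ : Signature} {A : Type} (Alg : UAlgebra σ A) {k : ℕ}
    (t : UTerm σ k) (j : Fin k) : Prop :=
  ∃ (c : Fin k → A) (x y : A),
    Alg.eval t (Function.update c j x) ≠ Alg.eval t (Function.update c j y)

/-- `s` is a sink for `A`: every term operation depending on its `j`-th argument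
returns `s` whenever `s` is placed in position `j`. -/
def IsSink {σ : Signature} {A : Type} (Alg : UAlgebra σ A) (s : A) : Prop :=
  ∀ (k : ℕ) (t : UTerm σ k) (j : Fin k), UDependsOn Alg t j →
    ∀ c : Fin k → A, Alg.eval t (Function.update c j s) = s

/-- `C(β, γ; δ)` : `β` centralizes `γ` modulo `δ`. -/
def Centralizes {σ : Signature} {A : Type} (Alg : UAlgebra σ A)
    (β γ δ : A → A → Prop) : Prop :=
  ∀ (ℓ m : ℕ) (t : UTerm σ (ℓ + m)) (a b : Fin ℓ → A) (u v : Fin m → A),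
    (∀ i, β (a i) (b i)) → (∀ i, γ (u i) (v i)) →
    (δ (Alg.eval t (Fin.append a u)) (Alg.eval t (Fin.append a v)) ↔
      δ (Alg.eval t (Fin.append b u)) (Alg.eval t (Fin.append b v)))

/-- The join `θ₁ ∨ θ₂` in the congruence lattice of `Alg`: the least congruence
containing `θ₁` and `θ₂`. -/
def conJoin {σ : Signature} {A : Type} (Alg : UAlgebra σ A)
    (θ₁ θ₂ : A → A → Prop) : A → A → Prop :=
  fun x y => ∀ θ : A → A → Prop, Alg.IsCong θ →
    (∀ a b, θ₁ a b → θ a b) → (∀ a b, θ₂ a b → θ a b) → θ x y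

/-- The setoid determined by a congruence. -/
def congSetoid {σ : Signature} {A : Type} {Alg : UAlgebra σ A}
    {δ : A → A → Prop} (h : Alg.IsCong δ) : Setoid A :=
  ⟨δ, ⟨h.1, fun hab => h.2.1 _ _ hab, fun hab hbc => h.2.2.1 _ _ _ hab hbc⟩⟩

/-- The quotient algebra `A/δ` (of a congruence-induced setoid). -/
noncomputable def quotAlgebra {σ : Signature} {A : Type} (Alg : UAlgebra σ A) (s : Setoid A) :
    UAlgebra σ (Quotient s) :=
  ⟨fun f x => Quotient.mk s (Alg.interp f (fun j => (x j).out))⟩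

/-- The image `β/δ` of a congruence `β` on the quotient `A/δ`. -/
def quotCong {A : Type} (s : Setoid A) (β : A → A → Prop) :
    Quotient s → Quotient s → Prop :=
  fun x y => ∃ a b : A, Quotient.mk s a = x ∧ Quotient.mk s b = y ∧ β a b

/-- Row-major pairing of indices: `(i, j) ↦ i * m + j`. -/
def pairIdx {l m : ℕ} (i : Fin l) (j : Fin m) : Fin (l * m) :=
  ⟨i.val * m + j.val, by
    have h1 : i.val * m + j.val < i.val * m + m := Nat.add_lt_add_left j.isLt _
    have h2 : i.val * m + m = (i.val + 1) * m := (Nat.succ_mul i.val m).symm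
    have h3 : (i.val + 1) * m ≤ l * m :=
      Nat.mul_le_mul_right m (Nat.succ_le_of_lt i.isLt)
    omega⟩

/-- Simultaneous substitution into a term. -/
def UTerm.bind {σ : Signature} {n k : ℕ} : UTerm σ n → (Fin n → UTerm σ k) → UTerm σ k
  | .var i, s => s i
  | .app f ts, s => .app f (fun j => (ts j).bind s)

/-- The star composition `f ⋆ g` of terms: the `ℓm`-ary term
`(f ⋆ g)(a₁₁,…,a_{ℓm}) = f(g(a₁₁,…,a₁ₘ), …, g(a_{ℓ1},…,a_{ℓm}))`. -/
def starTerm {σ : Signature} {l m : ℕ} (f : UTerm σ l) (g : UTerm σ m) :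
    UTerm σ (l * m) :=
  f.bind (fun i => g.bind (fun j => .var (pairIdx i j)))

/-- Star composition on arity-indexed terms. -/
def sigStar {σ : Signature} (p q : Σ k, UTerm σ k) : Σ k, UTerm σ k :=
  ⟨p.1 * q.1, starTerm p.2 q.2⟩

/-- The left-associated iterated star `p ⋆ q₀ ⋆ q₁ ⋆ ⋯`. -/
def iterStar {σ : Signature} (p : Σ k, UTerm σ k) :
    List (Σ k, UTerm σ k) → Σ k, UTerm σ k
  | [] => p
  | q :: rest => iterStar (sigStar p q) rest

/-- `B` is an absorbing subuniverse of the subalgebra with universe `R`. -/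
def AbsorbingIn {σ : Signature} {A : Type} (Alg : UAlgebra σ A) (R B : Set A) : Prop :=
  B.Nonempty ∧ B ⊆ R ∧ Alg.IsSubuniv B ∧
  ∃ (k : ℕ) (t : UTerm σ k), ∀ (j : Fin k) (x : Fin k → A),
    (∀ i, i ≠ j → x i ∈ B) → x j ∈ R → Alg.eval t x ∈ B


section CubeSinkHelpers

variable {σ : Signature}

theorem eval_const' {A : Type} (Alg : UAlgebra σ A) (hid : Alg.Idempotent)
    {m : ℕ} (t : UTerm σ m) (a : A) : Alg.eval t (fun _ => a) = a := by
  induction t with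
  | var i => rfl
  | app f ts ih =>
    show Alg.interp f (fun j => Alg.eval (ts j) fun _ => a) = a
    have h : (fun j => Alg.eval (ts j) fun _ => a) = fun _ => a := funext fun j => ih j
    rw [h]; exact hid f a

theorem eval_prod' {n : ℕ} {A : Fin n → Type} (Alg : ∀ i, UAlgebra σ (A i))
    {m : ℕ} (t : UTerm σ m) (x : Fin m → ∀ i, A i) (i : Fin n) :
    (prodAlgebra Alg).eval t x i = (Alg i).eval t (fun j => x j i) := by
  induction t with
  | var j => rfl
  | app f ts ih =>
    show (prodAlgebra Alg).interp f (fun j => (prodAlgebra Alg).eval (ts j) x) i = _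
    show (Alg i).interp f (fun j => (prodAlgebra Alg).eval (ts j) x i) = _
    have h : (fun j => (prodAlgebra Alg).eval (ts j) x i)
        = fun j => (Alg i).eval (ts j) (fun q => x q i) := funext fun j => ih j
    rw [h]; rfl

theorem subuniv_eval' {A : Type} (Alg : UAlgebra σ A) {R : Set A} (hR : Alg.IsSubuniv R)
    {m : ℕ} (t : UTerm σ m) (x : Fin m → A) (hx : ∀ j, x j ∈ R) : Alg.eval t x ∈ R := by
  induction t with
  | var j => exact hx j
  | app f ts ih => exact hR f _ fun j => ih j

theorem eval_eq_of_agree {A : Type} (Alg : UAlgebra σ A) {m : ℕ} (t : UTerm σ m)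
    (S : Finset (Fin m)) (hS : ∀ q ∈ S, ¬ UDependsOn Alg t q) :
    ∀ x y : Fin m → A, (∀ q ∉ S, x q = y q) → Alg.eval t x = Alg.eval t y := by
  classical
  induction S using Finset.induction_on with
  | empty =>
    intro x y h
    have hxy : x = y := funext fun q => h q (Finset.notMem_empty q)
    rw [hxy]
  | @insert a S' ha ih =>
    intro x y h
    have hda : ¬ UDependsOn Alg t a := hS a (Finset.mem_insert_self a S')
    have hconst : ∀ (c : Fin m → A) (xx yy : A),
        Alg.eval t (Function.update c a xx) = Alg.eval t (Function.update c a yy) := by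
      intro c xx yy
      by_contra hne
      exact hda ⟨c, xx, yy, hne⟩
    have h1 : Alg.eval t x = Alg.eval t (Function.update x a (y a)) := by
      conv_lhs => rw [← Function.update_eq_self a x]
      exact hconst x (x a) (y a)
    rw [h1]
    apply ih (fun q hq => hS q (Finset.mem_insert_of_mem hq))
    intro q hq
    by_cases hqa : q = a
    · subst hqa; simp
    · rw [Function.update_of_ne hqa]
      exact h q (by simp [Finset.mem_insert, hqa, hq])

theorem collapse_of_no_dep {A : Type} (Alg : UAlgebra σ A) (hid : Alg.Idempotent)
    {m : ℕ} (t : UTerm σ m) (hnd : ∀ q, ¬ UDependsOn Alg t q) (a b : A) : a = b := by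
  have h := eval_eq_of_agree Alg t Finset.univ (fun q _ => hnd q)
      (fun _ => a) (fun _ => b) (fun q hq => absurd (Finset.mem_univ q) hq)
  rw [eval_const' Alg hid t a, eval_const' Alg hid t b] at h
  exact h

theorem eval_pinned {A : Type} (Alg : UAlgebra σ A) (hid : Alg.Idempotent)
    {m : ℕ} (t : UTerm σ m) (p : Fin m) (hnd : ∀ q, q ≠ p → ¬ UDependsOn Alg t q)
    (z : Fin m → A) : Alg.eval t z = z p := by
  classical
  have h := eval_eq_of_agree Alg t (Finset.univ.erase p)
      (fun q hq => hnd q (Finset.ne_of_mem_erase hq)) z (fun _ => z p)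
      (fun q hq => by
        have hqp : q = p := by
          by_contra hne
          exact hq (Finset.mem_erase.mpr ⟨hne, Finset.mem_univ q⟩)
        rw [hqp])
  rw [h, eval_const' Alg hid t (z p)]

theorem pick_zero {A : Type} (x y : A) : pick x y 0 = x := rfl

theorem pick_one {A : Type} (x y : A) : pick x y 1 = y := rfl

theorem fin_two_eq_one {b : Fin 2} (h : b ≠ 0) : b = 1 := by omega

theorem eval_bind' {A : Type} (Alg : UAlgebra σ A) {m k : ℕ} (t : UTerm σ m)
    (sub : Fin m → UTerm σ k) (env : Fin k → A) :
    Alg.eval (t.bind sub) env = Alg.eval t (fun i => Alg.eval (sub i) env) := by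
  induction t with
  | var i => rfl
  | app f ts ih =>
    show Alg.interp f (fun j => Alg.eval ((ts j).bind sub) env) = _
    have h : (fun j => Alg.eval ((ts j).bind sub) env)
        = fun j => Alg.eval (ts j) (fun i => Alg.eval (sub i) env) := funext fun j => ih j
    rw [h]; rfl

theorem eval_star {A : Type} (Alg : UAlgebra σ A) {l m : ℕ} (f : UTerm σ l) (g : UTerm σ m)
    (env : Fin (l * m) → A) :
    Alg.eval (starTerm f g) env =
      Alg.eval f (fun p => Alg.eval g (fun q => env (pairIdx p q))) := by
  unfold starTerm
  rw [eval_bind']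
  have h : (fun i => Alg.eval (UTerm.bind g fun j => UTerm.var (pairIdx i j)) env)
      = fun p => Alg.eval g (fun q => env (pairIdx p q)) := by
    funext p
    rw [eval_bind']
    rfl
  rw [h]

theorem collapse_taylor {A : Type} (Alg : UAlgebra σ A) (hid : Alg.Idempotent)
    {m : ℕ} (t : UTerm σ m) (u v : Fin m → Fin m → Fin 2) (p : Fin m)
    (hup : u p p = 0) (hvp : v p p = 1)
    (hident : ∀ x y : A, Alg.eval t (fun j => pick x y (u p j))
      = Alg.eval t (fun j => pick x y (v p j)))
    (hnd : ∀ q, q ≠ p → ¬ UDependsOn Alg t q) (a b : A) : a = b := by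
  have h := hident a b
  rw [eval_pinned Alg hid t p hnd, eval_pinned Alg hid t p hnd] at h
  simp only [hup, hvp, pick_zero, pick_one] at h
  exact h

theorem common_cube {n : ℕ} {A : Fin n → Type} (Alg : ∀ i, UAlgebra σ (A i))
    (hidem : ∀ i, (Alg i).Idempotent) (S : Finset (Fin n))
    (hc : ∀ i ∈ S, ∃ (k : ℕ) (c : UTerm σ k), IsCubeTerm (Alg i) c) :
    ∃ (K : ℕ) (C : UTerm σ K), ∀ P : Fin K, ∃ W : Fin K → Fin 2, W P = 0 ∧
      ∀ i ∈ S, ∀ x y : A i, (Alg i).eval C (fun q => pick x y (W q)) = y := by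
  classical
  induction S using Finset.induction_on with
  | empty =>
    exact ⟨1, .var 0, fun P => ⟨fun _ => 0, rfl,
      fun i hi => absurd hi (Finset.notMem_empty i)⟩⟩
  | @insert i₀ S' hi₀ ih =>
    obtain ⟨K, C, hC⟩ := ih (fun i hi => hc i (Finset.mem_insert_of_mem hi))
    obtain ⟨m, c, hcid, hcw⟩ := hc i₀ (Finset.mem_insert_self i₀ S')
    by_cases htriv : ∀ a b : A i₀, a = b
    · refine ⟨K, C, fun P => ?_⟩
      obtain ⟨W, hW0, hWid⟩ := hC P
      refine ⟨W, hW0, fun i hi x y => ?_⟩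
      rcases Finset.mem_insert.mp hi with h | h
      · subst h; exact htriv _ _
      · exact hWid i h x y
    · rcases Nat.eq_zero_or_pos m with hm0 | hm
      · exfalso
        apply htriv
        intro a b
        subst hm0
        have he : (fun _ : Fin 0 => a) = (fun _ : Fin 0 => b) :=
          funext fun q => q.elim0
        calc a = (Alg i₀).eval c (fun _ => a) := (hcid a).symm
          _ = (Alg i₀).eval c (fun _ => b) := by rw [he]
          _ = b := hcid b
      · -- star composition
        have hdiv : ∀ j : Fin (K * m), j.val / m < K := fun j =>
          (Nat.div_lt_iff_lt_mul hm).mpr j.isLt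
        set φ : Fin (K * m) → Fin K := fun j => ⟨j.val / m, hdiv j⟩ with hφdef
        set ψ : Fin (K * m) → Fin m := fun j => ⟨j.val % m, Nat.mod_lt _ hm⟩ with hψdef
        have hφ : ∀ (p' : Fin K) (q' : Fin m), φ (pairIdx p' q') = p' := by
          intro p' q'
          apply Fin.ext
          show (p'.val * m + q'.val) / m = p'.val
          have e : p'.val * m + q'.val = q'.val + p'.val * m := by ring
          rw [e, Nat.add_mul_div_right _ _ hm, Nat.div_eq_of_lt q'.isLt, Nat.zero_add]
        have hψ : ∀ (p' : Fin K) (q' : Fin m), ψ (pairIdx p' q') = q' := by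
          intro p' q'
          apply Fin.ext
          show (p'.val * m + q'.val) % m = q'.val
          have e : p'.val * m + q'.val = q'.val + p'.val * m := by ring
          rw [e, Nat.add_mul_mod_self_right, Nat.mod_eq_of_lt q'.isLt]
        refine ⟨K * m, starTerm C c, fun P => ?_⟩
        obtain ⟨W₁, hW₁0, hW₁id⟩ := hC (φ P)
        obtain ⟨W₂, hW₂0, hW₂id⟩ := hcw (ψ P)
        refine ⟨fun j => if W₁ (φ j) = 0 then W₂ (ψ j) else 1, ?_, ?_⟩
        · show (if W₁ (φ P) = 0 then W₂ (ψ P) else 1) = 0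
          rw [if_pos hW₁0]; exact hW₂0
        · intro i hi x y
          rw [eval_star]
          have hWpair : ∀ (p' : Fin K) (q' : Fin m),
              (if W₁ (φ (pairIdx p' q')) = 0 then W₂ (ψ (pairIdx p' q')) else 1)
              = if W₁ p' = 0 then W₂ q' else 1 := by
            intro p' q'
            rw [hφ p' q', hψ p' q']
          rcases Finset.mem_insert.mp hi with h | h
          · subst h
            have harg : (fun p' => (Alg i).eval c fun q' =>
                pick x y (if W₁ (φ (pairIdx p' q')) = 0 then W₂ (ψ (pairIdx p' q')) else 1))
                = fun _ : Fin K => y := by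
              funext p'
              by_cases h0 : W₁ p' = 0
              · have e : (fun q' => pick x y
                    (if W₁ (φ (pairIdx p' q')) = 0 then W₂ (ψ (pairIdx p' q')) else 1))
                    = fun q' => pick x y (W₂ q') := by
                  funext q'; rw [hWpair, if_pos h0]
                rw [e]; exact hW₂id x y
              · have e : (fun q' => pick x y
                    (if W₁ (φ (pairIdx p' q')) = 0 then W₂ (ψ (pairIdx p' q')) else 1))
                    = fun _ => y := by
                  funext q'; rw [hWpair, if_neg h0, pick_one]
                rw [e]; exact eval_const' (Alg i) (hidem i) c y
            rw [harg]
            exact eval_const' (Alg i) (hidem i) C y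
          · set Z := (Alg i).eval c (fun q' => pick x y (W₂ q')) with hZ
            have harg : (fun p' => (Alg i).eval c fun q' =>
                pick x y (if W₁ (φ (pairIdx p' q')) = 0 then W₂ (ψ (pairIdx p' q')) else 1))
                = fun p' => pick Z y (W₁ p') := by
              funext p'
              by_cases h0 : W₁ p' = 0
              · have e : (fun q' => pick x y
                    (if W₁ (φ (pairIdx p' q')) = 0 then W₂ (ψ (pairIdx p' q')) else 1))
                    = fun q' => pick x y (W₂ q') := by
                  funext q'; rw [hWpair, if_pos h0]
                rw [e, h0, pick_zero]
              · have e : (fun q' => pick x y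
                    (if W₁ (φ (pairIdx p' q')) = 0 then W₂ (ψ (pairIdx p' q')) else 1))
                    = fun _ => y := by
                  funext q'; rw [hWpair, if_neg h0, pick_one]
                rw [e, fin_two_eq_one h0, pick_one]
                exact eval_const' (Alg i) (hidem i) c y
            rw [harg]
            exact hW₁id i h Z y

end CubeSinkHelpers

/-- Cube terms on `α`, sinks off `α`: `Proj_α R × {s}` is contained in `R`
(hence is a subuniverse of `R`). -/
theorem cube_sink_subuniverse
    {σ : Signature} {n : ℕ} {A : Fin n → Type} [∀ i, Finite (A i)]
    (Alg : ∀ i, UAlgebra σ (A i))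
    (hidem : ∀ i, (Alg i).Idempotent)
    {nt : ℕ} (t : UTerm σ nt) (ht : IsTaylorFamily Alg t)
    (α : Set (Fin n)) (hane : α.Nonempty) (haproper : α ≠ Set.univ)
    (hcube : ∀ i ∈ α, ∃ (k : ℕ) (c : UTerm σ k), IsCubeTerm (Alg i) c)
    (s : ∀ i, A i) (hsink : ∀ j ∉ α, IsSink (Alg j) (s j))
    (R : Set (∀ i, A i)) (hR : IsSubdirect Alg R) :
    ∀ x : ∀ i, A i,
      (∃ r ∈ R, ∀ i ∈ α, r i = x i) → (∀ j ∉ α, x j = s j) → x ∈ R := by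
  classical
  obtain ⟨Rne, hRsub, hRsd⟩ := hR
  obtain ⟨u, v, huv, htay⟩ := ht
  obtain ⟨K, C, hC⟩ := common_cube Alg hidem (Set.toFinite α).toFinset
    (fun i hi => hcube i ((Set.Finite.mem_toFinset _).mp hi))
  have hcoll0 : ∀ (j : Fin n) {m : ℕ} (tt : UTerm σ m),
      (∀ q, ¬ UDependsOn (Alg j) tt q) → ∀ a b : A j, a = b :=
    fun j _ tt h a b => collapse_of_no_dep (Alg j) (hidem j) tt h a b
  have hcollt : ∀ (j : Fin n) (p : Fin nt),
      (∀ q, q ≠ p → ¬ UDependsOn (Alg j) t q) → ∀ a b : A j, a = b := by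
    intro j p hnd a b
    exact collapse_taylor (Alg j) (hidem j) t u v p (huv p).1 (huv p).2
      (fun x y => (htay j).2 p x y) hnd a b
  have main : ∀ Q : Finset (Fin n), (∀ j ∈ Q, j ∉ α) → ∀ r ∈ R, ∃ w ∈ R,
      (∀ i ∈ α, w i = r i) ∧ (∀ j ∈ Q, w j = s j) := by
    intro Q
    induction Q using Finset.induction_on with
    | empty =>
      intro _ r hr
      exact ⟨r, hr, fun i _ => rfl, fun j hj => absurd hj (Finset.notMem_empty j)⟩
    | @insert j₀ Q hj₀Q ih =>
      intro hQ r hr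
      have hj₀α : j₀ ∉ α := hQ j₀ (Finset.mem_insert_self j₀ Q)
      have hQα : ∀ j ∈ Q, j ∉ α := fun j hj => hQ j (Finset.mem_insert_of_mem hj)
      obtain ⟨d, hdR, hdα, hdQ⟩ := ih hQα r hr
      have step1 : ∃ b ∈ R, (∀ j ∈ Q, b j = s j) ∧ b j₀ = s j₀ := by
        by_cases hdep : ∃ p : Fin nt, UDependsOn (Alg j₀) t p
        · obtain ⟨p, hp⟩ := hdep
          obtain ⟨z, hzR, hz⟩ := hRsd j₀ (s j₀)
          set args : Fin nt → (∀ i, A i) := Function.update (fun _ => d) p z with hargs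
          have hargsR : ∀ q, args q ∈ R := by
            intro q
            by_cases hq : q = p
            · subst hq; simp only [hargs, Function.update_self]; exact hzR
            · simp only [hargs, Function.update_of_ne hq]; exact hdR
          refine ⟨(prodAlgebra Alg).eval t args,
            subuniv_eval' _ hRsub t args hargsR, ?_, ?_⟩
          · intro j hjQ
            rw [eval_prod']
            by_cases hdep2 : ∃ q, q ≠ p ∧ UDependsOn (Alg j) t q
            · obtain ⟨q₀, hq₀p, hq₀⟩ := hdep2
              have hval : args q₀ j = s j := by
                simp only [hargs, Function.update_of_ne hq₀p]; exact hdQ j hjQ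
              have e : (fun q => args q j)
                  = Function.update (fun q => args q j) q₀ (s j) := by
                conv_lhs => rw [← Function.update_eq_self q₀ (fun q => args q j)]
                rw [show args q₀ j = s j from hval]
              rw [e]
              exact hsink j (hQα j hjQ) nt t q₀ hq₀ _
            · push_neg at hdep2
              exact hcollt j p (fun q hq => hdep2 q hq) _ _
          · rw [eval_prod']
            have e : (fun q => args q j₀) = Function.update (fun _ => d j₀) p (s j₀) := by
              funext q
              by_cases hq : q = p
              · subst hq
                simp only [hargs, Function.update_self]
                exact hz
              · simp only [hargs, Function.update_of_ne hq]
            rw [e]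
            exact hsink j₀ hj₀α nt t p hp _
        · push_neg at hdep
          exact ⟨d, hdR, hdQ, hcoll0 j₀ t (fun q => hdep q) _ _⟩
      obtain ⟨b, hbR, hbQ, hbj₀⟩ := step1
      by_cases hdepC : ∃ q₁ : Fin K, UDependsOn (Alg j₀) C q₁
      · obtain ⟨q₁, hq₁⟩ := hdepC
        obtain ⟨W, hW0, hWid⟩ := hC q₁
        set args : Fin K → (∀ i, A i) := fun q => if W q = 0 then b else d with hargs
        have hargsR : ∀ q, args q ∈ R := by
          intro q
          simp only [hargs]
          split
          · exact hbR
          · exact hdR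
        have hα : ∀ i ∈ α, (prodAlgebra Alg).eval C args i = r i := by
          intro i hiα
          rw [eval_prod']
          have e : (fun q => args q i) = fun q => pick (b i) (d i) (W q) := by
            funext q
            simp only [hargs, pick]
            split
            · rfl
            · rfl
          rw [e, hWid i ((Set.Finite.mem_toFinset _).mpr hiα) (b i) (d i)]
          exact hdα i hiα
        have hcoordQ : ∀ j ∈ Q, (prodAlgebra Alg).eval C args j = s j := by
          intro j hj
          rw [eval_prod']
          have e : (fun q => args q j) = fun _ => s j := by
            funext q
            simp only [hargs]
            split
            · exact hbQ j hj
            · exact hdQ j hj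
          rw [e]
          exact eval_const' (Alg j) (hidem j) C (s j)
        have hcoordj₀ : (prodAlgebra Alg).eval C args j₀ = s j₀ := by
          rw [eval_prod']
          have hval : args q₁ j₀ = s j₀ := by
            simp only [hargs, if_pos hW0]; exact hbj₀
          have e : (fun q => args q j₀)
              = Function.update (fun q => args q j₀) q₁ (s j₀) := by
            conv_lhs => rw [← Function.update_eq_self q₁ (fun q => args q j₀)]
            rw [show args q₁ j₀ = s j₀ from hval]
          rw [e]
          exact hsink j₀ hj₀α K C q₁ hq₁ _
        refine ⟨(prodAlgebra Alg).eval C args,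
          subuniv_eval' _ hRsub C args hargsR, hα, fun j hj => ?_⟩
        rcases Finset.mem_insert.mp hj with h | h
        · rw [h]; exact hcoordj₀
        · exact hcoordQ j h
      · push_neg at hdepC
        refine ⟨d, hdR, hdα, fun j hj => ?_⟩
        rcases Finset.mem_insert.mp hj with h | h
        · rw [h]
          exact hcoll0 j₀ C (fun q => hdepC q) _ _
        · exact hdQ j h
  intro x hx hxs
  obtain ⟨r, hrR, hrα⟩ := hx
  obtain ⟨w, hwR, hwα, hwQ⟩ := main (Finset.univ.filter (fun j => j ∉ α))
    (fun j hj => (Finset.mem_filter.mp hj).2) r hrR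
  have hxw : x = w := by
    funext i
    by_cases hiα : i ∈ α
    · rw [hwα i hiα, hrα i hiα]
    · rw [hxs i hiα, hwQ i (Finset.mem_filter.mpr ⟨Finset.mem_univ i, hiα⟩)]
  rw [hxw]; exact hwR
end

section
/- A finite commutative idempotent binar A has a cube-term blocker if and only if the two-element semilattice S2 belongs to HS(A) (i.e., S2 is a homomorphic image of some subalgebra of A). -/
/-- Terms of a single binary operation (elements of the free magma) in `n` variables. -/
inductive MTerm : ℕ → Type
  | var : ∀ {n}, Fin n → MTerm n
  | mul : ∀ {n}, MTerm n → MTerm n → MTerm n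

namespace MTerm

/-- Realization of a magma term in a type with a binary operation. -/
def eval {A : Type} [Mul A] {n : ℕ} : MTerm n → (Fin n → A) → A
  | var i, env => env i
  | mul s t, env => s.eval env * t.eval env

end MTerm

/-- A commutative idempotent binar: a single binary operation that is
commutative and idempotent. -/
def IsCIB (A : Type) [Mul A] : Prop :=
  (∀ x y : A, x * y = y * x) ∧ ∀ x : A, x * x = x

/-- `t` is a `(k+1)`-ary edge term for `A`:
`t(y,y,x,…,x) ≈ x`, `t(y,x,y,x,…,x) ≈ x`, and `t(x,…,x,y,x,…,x) ≈ x`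
for `y` in any position `j` with `4 ≤ j ≤ k+1` (1-indexed). -/
def IsEdgeTerm (A : Type) [Mul A] {k : ℕ} (t : MTerm (k + 1)) : Prop :=
  ∀ x y : A,
    (t.eval (fun i => if i.val ≤ 1 then y else x) = x) ∧
    (t.eval (fun i => if i.val = 0 ∨ i.val = 2 then y else x) = x) ∧
    ∀ j : Fin (k + 1), 3 ≤ j.val → t.eval (fun i => if i = j then y else x) = x

/-- `A` has an edge term. -/
def HasEdgeTerm (A : Type) [Mul A] : Prop :=
  ∃ k : ℕ, 1 < k ∧ ∃ t : MTerm (k + 1), IsEdgeTerm A t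

/-- The two-element meet-semilattice `S₂` is a homomorphic image of a
subalgebra of `A` (identifying `S₂` with `Bool` under `&&`). -/
def S2inHS (A : Type) [Mul A] : Prop :=
  ∃ (B : Set A) (h : A → Bool),
    (∀ x ∈ B, ∀ y ∈ B, x * y ∈ B) ∧
    (∀ x ∈ B, ∀ y ∈ B, h (x * y) = (h x && h y)) ∧
    (∃ b ∈ B, h b = false) ∧ (∃ b ∈ B, h b = true)

/-- `A` has a cube-term blocker: a pair `(D, S)` of subuniverses with
`∅ ≠ D ⊊ S ⊆ A` such that every `n`-ary term has a coordinate `i` with: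
any tuple from `S` whose `i`-th entry lies in `D` is mapped into `D`. -/
def HasCTB (A : Type) [Mul A] : Prop :=
  ∃ D S : Set A, D.Nonempty ∧ D ⊆ S ∧ D ≠ S ∧
    (∀ x ∈ D, ∀ y ∈ D, x * y ∈ D) ∧ (∀ x ∈ S, ∀ y ∈ S, x * y ∈ S) ∧
    ∀ (n : ℕ) (t : MTerm n), ∃ i : Fin n, ∀ s : Fin n → A,
      (∀ j, s j ∈ S) → s i ∈ D → t.eval s ∈ D

/-- A CIB is abelian if for every `(ℓ+m)`-ary term operation `t` and all tuples
`a b, u v`: `t(a,u) = t(a,v) ↔ t(b,u) = t(b,v)`. -/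
def CIBAbelian (A : Type) [Mul A] : Prop :=
  ∀ (l m : ℕ) (t : MTerm (l + m)) (a b : Fin l → A) (u v : Fin m → A),
    (t.eval (Fin.append a u) = t.eval (Fin.append a v) ↔
      t.eval (Fin.append b u) = t.eval (Fin.append b v))


/-- The leftmost variable occurring in a magma term. -/
def MTerm.idx {n : ℕ} : MTerm n → Fin n
  | .var i => i
  | .mul u _ => u.idx

lemma MTerm.eval_mem {A : Type} [Mul A] {B : Set A}
    (hB : ∀ x ∈ B, ∀ y ∈ B, x * y ∈ B) {n : ℕ} (t : MTerm n)
    (s : Fin n → A) (hs : ∀ j, s j ∈ B) : t.eval s ∈ B := by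
  induction t with
  | var i => exact hs i
  | mul u v ihu ihv => exact hB _ ihu _ ihv

lemma MTerm.eval_false {A : Type} [Mul A] {B : Set A} {h : A → Bool}
    (hB : ∀ x ∈ B, ∀ y ∈ B, x * y ∈ B)
    (hhom : ∀ x ∈ B, ∀ y ∈ B, h (x * y) = (h x && h y))
    {n : ℕ} (t : MTerm n) (s : Fin n → A) (hs : ∀ j, s j ∈ B)
    (hf : h (s t.idx) = false) : h (t.eval s) = false := by
  induction t with
  | var i => exact hf
  | mul u v ihu ihv =>
    have hu : u.eval s ∈ B := u.eval_mem hB s hs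
    have hv : v.eval s ∈ B := v.eval_mem hB s hs
    show h (u.eval s * v.eval s) = false
    rw [hhom _ hu _ hv, ihu hf]
    rfl

/-- A finite CIB has a cube-term blocker iff `S₂ ∈ HS(A)`. -/
theorem cib_ctb_iff_S2
    (A : Type) [Mul A] [Finite A] (hA : IsCIB A) :
    HasCTB A ↔ S2inHS A := by
  obtain ⟨hcomm, hidem⟩ := hA
  constructor
  · rintro ⟨D, S, hDne, hDS, hDneq, hDmul, hSmul, hblock⟩
    -- D is absorbing: x ∈ D, y ∈ S ⇒ x * y ∈ D
    have habs : ∀ x ∈ D, ∀ y ∈ S, x * y ∈ D := by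
      obtain ⟨i, hi⟩ := hblock 2 (MTerm.mul (.var 0) (.var 1))
      intro x hx y hy
      match i, hi with
      | ⟨0, _⟩, hi =>
        have := hi (fun j => if j.val = 0 then x else y)
          (by intro j; match j with
              | ⟨0, _⟩ => exact hDS hx
              | ⟨1, _⟩ => exact hy) hx
        simpa [MTerm.eval] using this
      | ⟨1, _⟩, hi =>
        have := hi (fun j => if j.val = 0 then y else x)
          (by intro j; match j with
              | ⟨0, _⟩ => exact hy
              | ⟨1, _⟩ => exact hDS hx) hx
        simp only [MTerm.eval] at this
        simpa [hcomm x y] using this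
    -- pick a ∈ S \ D
    have hss : D ⊂ S := hDS.ssubset_of_ne hDneq
    obtain ⟨a, haS, haD⟩ := Set.exists_of_ssubset hss
    classical
    have hne : ∀ x ∈ D, x ≠ a := by
      intro x hx e; exact haD (e ▸ hx)
    refine ⟨insert a D, fun z => if z = a then true else false, ?_, ?_, ?_, ?_⟩
    · intro x hx y hy
      rcases hx with rfl | hx <;> rcases hy with rfl | hy
      · left; exact hidem _
      · right
        have hc : y * x ∈ D := habs y hy x haS
        rwa [hcomm y x] at hc
      · right; exact habs x hx y haS
      · right; exact hDmul x hx y hy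
    · intro x hx y hy
      rcases hx with rfl | hx <;> rcases hy with rfl | hy
      · simp [hidem _]
      · have hxy : x * y ∈ D := by
          have hc : y * x ∈ D := habs y hy x haS
          rwa [hcomm y x] at hc
        simp [hne _ hxy, hne _ hy]
      · have hxy : x * y ∈ D := habs x hx y haS
        simp [hne _ hxy, hne _ hx]
      · have hxy : x * y ∈ D := hDmul x hx y hy
        simp [hne _ hxy, hne _ hx]
    · obtain ⟨d, hd⟩ := hDne
      exact ⟨d, Or.inr hd, by simp [hne _ hd]⟩
    · exact ⟨a, Or.inl rfl, by simp⟩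
  · rintro ⟨B, h, hBmul, hhom, ⟨b0, hb0B, hb0⟩, ⟨b1, hb1B, hb1⟩⟩
    refine ⟨{x | x ∈ B ∧ h x = false}, B, ⟨b0, hb0B, hb0⟩, fun x hx => hx.1, ?_, ?_, hBmul, ?_⟩
    · intro he
      have hmem : b1 ∈ {x | x ∈ B ∧ h x = false} := by rw [he]; exact hb1B
      simp only [Set.mem_setOf_eq] at hmem
      rw [hb1] at hmem
      exact Bool.noConfusion hmem.2
    · intro x hx y hy
      refine ⟨hBmul x hx.1 y hy.1, ?_⟩
      rw [hhom x hx.1 y hy.1, hx.2]; rfl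
    · intro n t
      refine ⟨t.idx, fun s hs hsi => ⟨t.eval_mem hBmul s hs, t.eval_false hBmul hhom s hs hsi.2⟩⟩
end

section
/- Every finite abelian commutative idempotent binar has odd cardinality. -/
/-- Every finite abelian CIB has odd cardinality. -/
theorem cib_abelian_odd
    (A : Type) [Mul A] [Finite A] [Nonempty A]
    (hA : IsCIB A) (hab : CIBAbelian A) :
    Odd (Nat.card A) := by
  classical
  obtain ⟨hcomm, hidem⟩ := hA
  -- left translations are injective
  have hinj : ∀ a u v : A, a * u = a * v → u = v := by
    intro a u v h
    have h1 : u * u = u * v :=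
      (hab 1 1 (MTerm.mul (.var 0) (.var 1)) ![a] ![u] ![u] ![v]).mp h
    have h2 : v * u = v * v :=
      (hab 1 1 (MTerm.mul (.var 0) (.var 1)) ![a] ![v] ![u] ![v]).mp h
    calc u = u * u := (hidem u).symm
    _ = u * v := h1
    _ = v * u := hcomm u v
    _ = v * v := h2
    _ = v := hidem v
  have hsurj : ∀ a : A, Function.Surjective (fun x => a * x) := fun a =>
    Finite.surjective_of_injective (fun u v h => hinj a u v h)
  cases nonempty_fintype A
  set b := Classical.arbitrary A with hb
  set α := {p : A × A // p.1 * p.2 = b} with hα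
  -- the swap involution on α
  let f : Function.End α := fun p => ⟨(p.1.2, p.1.1), by rw [hcomm]; exact p.2⟩
  have hf2 : f ^ 2 ^ 1 = 1 := by
    funext p; exact Subtype.ext (Prod.ext rfl rfl)
  have hmod := Equiv.Perm.card_fixedPoints_modEq (p := 2) (n := 1) hf2
  -- card α = card A
  have hcard : Fintype.card α = Fintype.card A := by
    apply Fintype.card_congr
    refine Equiv.ofBijective (fun p => p.1.1) ⟨?_, ?_⟩
    · rintro ⟨⟨x, y⟩, hy⟩ ⟨⟨x', y'⟩, hy'⟩ h
      simp only at h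
      subst h
      exact Subtype.ext (Prod.ext rfl (hinj x y y' (hy.trans hy'.symm)))
    · intro x
      obtain ⟨y, hy⟩ := hsurj x b
      exact ⟨⟨(x, y), hy⟩, rfl⟩
  -- fixed points: just (b, b)
  have hfix : Fintype.card (Function.fixedPoints f) = 1 := by
    rw [Fintype.card_eq_one_iff]
    refine ⟨⟨⟨(b, b), hidem b⟩, Subtype.ext (Prod.ext rfl rfl)⟩, ?_⟩
    rintro ⟨⟨⟨x, y⟩, hxy⟩, hfp⟩
    have h1 : y = x := congrArg (fun q => q.1.1) hfp
    subst h1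
    have h2 : y = b := (hidem y).symm.trans hxy
    subst h2
    rfl
  rw [hcard, hfix] at hmod
  rw [Nat.card_eq_fintype_card, Nat.odd_iff]
  simpa [Nat.ModEq] using hmod
end
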